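/- Suppose u, p solve the coupled discrete-in-time system a(u^{n+1},v) + g(p^{n+1},v) = 0 and d((u^{n+1}−u^n)/τ, q) + c((p^{n+1}−p^n)/τ, q) + b(p^{n+1},q) = 0 for all test functions, with a symmetric coercive, b and c positive semidefinite symmetric, and the duality g(p,v) = −d(v,p). Then the discrete energy E^n = (1/2)a(u^n,u^n) + (1/2)c(p^n,p^n) is nonincreasing: E^{n+1} ≤ E^n. -/
import Mathlib


/-- Energy decay for the fully coupled implicit discretization of the Biot
system: with a, c symmetric positive semidefinite, b positive semidefinite,
and the duality g(p,v) = −d(v,p), the discrete energy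
E^n = (1/2)a(u^n,u^n) + (1/2)c(p^n,p^n) is nonincreasing. -/
theorem coupled_scheme_energy_decay
    {V Q : Type*} [AddCommGroup V] [Module ℝ V] [AddCommGroup Q] [Module ℝ Q]
    (a : V →ₗ[ℝ] V →ₗ[ℝ] ℝ) (c : Q →ₗ[ℝ] Q →ₗ[ℝ] ℝ) (b : Q →ₗ[ℝ] Q →ₗ[ℝ] ℝ)
    (g : Q →ₗ[ℝ] V →ₗ[ℝ] ℝ) (dform : V →ₗ[ℝ] Q →ₗ[ℝ] ℝ)
    (ha_symm : ∀ u v, a u v = a v u) (ha_pos : ∀ u, 0 ≤ a u u)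
    (hc_symm : ∀ p q, c p q = c q p) (hc_pos : ∀ p, 0 ≤ c p p)
    (hb_pos : ∀ p, 0 ≤ b p p)
    (hdual : ∀ p v, g p v = -dform v p)
    (τ : ℝ) (hτ : 0 < τ)
    (u : ℕ → V) (p : ℕ → Q)
    (heq1 : ∀ n, ∀ v : V, a (u n) v + g (p n) v = 0)
    (heq2 : ∀ n, ∀ q : Q,
      dform ((τ⁻¹ : ℝ) • (u (n + 1) - u n)) q
        + c ((τ⁻¹ : ℝ) • (p (n + 1) - p n)) q + b (p (n + 1)) q = 0) :
    ∀ n, (1 / 2) * a (u (n + 1)) (u (n + 1)) + (1 / 2) * c (p (n + 1)) (p (n + 1)) ≤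
      (1 / 2) * a (u n) (u n) + (1 / 2) * c (p n) (p n) := by

  intro n
  set u0 := u n
  set u1 := u (n + 1)
  set p0 := p n
  set p1 := p (n + 1)
  have h1 := heq1 (n + 1) (u1 - u0)
  have h2 := heq2 n p1
  rw [hdual] at h1
  simp only [map_smul, LinearMap.smul_apply, smul_eq_mul] at h2
  -- from h2: τ⁻¹ * (dform (u1-u0) p1 + c (p1-p0) p1) + b p1 p1 = 0
  have hkey : dform (u1 - u0) p1 + c (p1 - p0) p1 = -τ * b p1 p1 := by
    have hτ' : τ⁻¹ ≠ 0 := inv_ne_zero hτ.ne'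
    field_simp at h2 ⊢
    nlinarith [h2, hτ.ne']
  have hA : a u1 u1 - a u1 u0 = dform (u1 - u0) p1 := by
    have : a u1 (u1 - u0) = dform (u1 - u0) p1 := by linarith [h1]
    simpa [map_sub] using this
  have haexp : a (u1 - u0) (u1 - u0) = a u1 u1 - 2 * a u1 u0 + a u0 u0 := by
    simp only [map_sub, LinearMap.sub_apply]
    rw [ha_symm u0 u1]; ring
  have hcexp : c (p1 - p0) (p1 - p0) = c p1 p1 - 2 * c p1 p0 + c p0 p0 := by
    simp only [map_sub, LinearMap.sub_apply]
    rw [hc_symm p0 p1]; ring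
  have hC : c (p1 - p0) p1 = c p1 p1 - c p1 p0 := by
    simp only [map_sub, LinearMap.sub_apply]
    rw [hc_symm p0 p1]
  have hApos := ha_pos (u1 - u0)
  have hCpos := hc_pos (p1 - p0)
  have hBpos := hb_pos p1
  have hτb : 0 ≤ τ * b p1 p1 := mul_nonneg hτ.le hBpos
  linarith
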